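/- arXiv:math/0404522 — 5 statements merged into one kernel-verified Lean document; each statement's English description precedes it below -/
import Mathlib

section
/- If V is a 2-dimensional ℂ-linear subspace of M₂(ℂ) such that the unital ℂ-subalgebra generated by V is all of M₂(ℂ), then the identity matrix 1 does not belong to V; consequently the span of {1} ∪ V is 3-dimensional. -/
abbrev M2 := Matrix (Fin 2) (Fin 2) ℂ

theorem aux_comm_contra (a : M2) (htop : (⊤ : Subalgebra ℂ M2) ≤ Algebra.adjoin ℂ {a}) :
    False := by
  have hcomm : ∀ x y : M2, Commute x y := by
    intro x y
    have hx : x ∈ Algebra.adjoin ℂ {a} := htop trivial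
    have hy : y ∈ Algebra.adjoin ℂ {a} := htop trivial
    rw [Algebra.adjoin_singleton_eq_range_aeval] at hx hy
    obtain ⟨p, hp⟩ := hx
    obtain ⟨q, hq⟩ := hy
    subst hp hq
    exact (Commute.all p q).map (Polynomial.aeval a)
  have := hcomm !![0,1;0,0] !![0,0;1,0]
  rw [Commute, SemiconjBy, ← Matrix.ext_iff] at this
  have h00 := this 0 0
  simp [Matrix.mul_apply, Fin.sum_univ_two] at h00

/-- If `V` is a 2-dimensional `ℂ`-linear subspace of `M₂(ℂ)` generating it as a unital
`ℂ`-algebra, then the identity matrix `1` does not belong to `V`; consequently the span of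
`{1} ∪ V` is 3-dimensional. -/
theorem one_not_mem_generating_two_dim_subspace (V : Submodule ℂ (Matrix (Fin 2) (Fin 2) ℂ))
    (hdim : Module.finrank ℂ V = 2)
    (hV : Algebra.adjoin ℂ (V : Set (Matrix (Fin 2) (Fin 2) ℂ)) = ⊤) :
    (1 : Matrix (Fin 2) (Fin 2) ℂ) ∉ V ∧
      Module.finrank ℂ
        (Submodule.span ℂ ({1} ∪ (V : Set (Matrix (Fin 2) (Fin 2) ℂ)))) = 3 := by
  have hone : (1 : M2) ≠ 0 := one_ne_zero
  have hr1 : Module.finrank ℂ (Submodule.span ℂ {(1 : M2)}) = 1 :=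
    finrank_span_singleton hone
  have h1 : (1 : M2) ∉ V := by
    intro h1
    -- find a ∈ V not in span {1}
    have hne : ¬ V ≤ Submodule.span ℂ {(1 : M2)} := by
      intro hle
      have := Submodule.finrank_mono hle
      rw [hdim, hr1] at this
      omega
    obtain ⟨a, haV, ha⟩ := SetLike.not_le_iff_exists.mp hne
    -- V = span {1, a}
    have hsub : Submodule.span ℂ {(1 : M2), a} ≤ V := by
      rw [Submodule.span_le]
      rintro x (rfl | rfl) <;> assumption
    have hdisj : Disjoint (Submodule.span ℂ {(1 : M2)}) (Submodule.span ℂ {a}) := by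
      rw [Submodule.disjoint_span_singleton]
      intro h; exact absurd h ha
    have hrk2 : Module.finrank ℂ (Submodule.span ℂ {(1 : M2), a}) = 2 := by
      have hra : Module.finrank ℂ (Submodule.span ℂ {a}) = 1 := by
        refine finrank_span_singleton ?_
        rintro rfl
        exact ha (Submodule.zero_mem _)
      have hsup := Submodule.finrank_sup_add_finrank_inf_eq
        (Submodule.span ℂ {(1 : M2)}) (Submodule.span ℂ {a})
      rw [disjoint_iff.mp hdisj, finrank_bot, hr1, hra] at hsup
      rw [Submodule.span_insert]; simpa using hsup
    have hVeq : Submodule.span ℂ {(1 : M2), a} = V :=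
      Submodule.eq_of_le_of_finrank_le hsub (by rw [hdim, hrk2])
    have hVle : (V : Set M2) ⊆ (Algebra.adjoin ℂ {a} : Subalgebra ℂ M2) := by
      intro v hv
      rw [← hVeq] at hv
      have : Submodule.span ℂ {(1 : M2), a}
          ≤ Subalgebra.toSubmodule (Algebra.adjoin ℂ {a}) := by
        rw [Submodule.span_le]
        rintro x (rfl | rfl)
        · exact Subalgebra.one_mem _
        · exact Algebra.subset_adjoin rfl
      exact this hv
    have : Algebra.adjoin ℂ (V : Set M2) ≤ Algebra.adjoin ℂ {a} :=
      Algebra.adjoin_le hVle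
    rw [hV] at this
    exact aux_comm_contra a this
  refine ⟨h1, ?_⟩
  have hspan : Submodule.span ℂ ({1} ∪ (V : Set M2))
      = Submodule.span ℂ {(1 : M2)} ⊔ V := by
    rw [Submodule.span_union, Submodule.span_eq]
  have hdisj : Disjoint V (Submodule.span ℂ {(1 : M2)}) := by
    rw [Submodule.disjoint_span_singleton]
    intro h; exact absurd h h1
  have hsup := Submodule.finrank_sup_add_finrank_inf_eq
    (Submodule.span ℂ {(1 : M2)}) V
  rw [disjoint_iff.mp hdisj.symm, finrank_bot, hr1, hdim] at hsup
  rw [hspan]; simpa using hsup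
end

section
/- Let γ : FreeAlgebra ℂ (Fin 2) → M₂(ℂ) be the unique ℂ-algebra homomorphism from the free unital associative ℂ-algebra on two generators X₁, X₂ sending X₁ ↦ σ₁ = [[0,1],[1,0]] and X₂ ↦ σ₃ = [[1,0],[0,-1]]. Then the kernel of γ equals the two-sided ideal of FreeAlgebra ℂ (Fin 2) generated by the three elements X₁X₁ − 1, X₂X₂ − 1, and X₁X₂ + X₂X₁. (This is the exactness of the Clifford resolution of M₂(ℂ) at its middle term.) -/
noncomputable section CliffordAux

open FreeAlgebra

local notation "F" => FreeAlgebra ℂ (Fin 2)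

private def Xg : F := ι ℂ (0 : Fin 2)
private def Yg : F := ι ℂ (1 : Fin 2)

private def Sgen : Set F :=
  { Xg * Xg - 1, Yg * Yg - 1, Xg * Yg + Yg * Xg }

private def S : TwoSidedIdeal F := TwoSidedIdeal.span Sgen

private lemma g1_mem : Xg * Xg - 1 ∈ S := TwoSidedIdeal.subset_span (by simp [Sgen])
private lemma g2_mem : Yg * Yg - 1 ∈ S := TwoSidedIdeal.subset_span (by simp [Sgen])
private lemma g3_mem : Xg * Yg + Yg * Xg ∈ S := TwoSidedIdeal.subset_span (by simp [Sgen])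

private lemma S_smul {c : ℂ} {z : F} (h : z ∈ S) : c • z ∈ S := by
  rw [Algebra.smul_def]
  exact S.mul_mem_left _ _ h

private def combo (a b c d : ℂ) : F := a • (1 : F) + b • Xg + c • Yg + d • (Xg * Yg)

private lemma combo_mul_x (a b c d : ℂ) :
    combo a b c d * Xg - combo b a (-d) (-c) ∈ S := by
  have h : combo a b c d * Xg - combo b a (-d) (-c) =
      b • (Xg * Xg - 1) + c • (Xg * Yg + Yg * Xg) +
        d • (Xg * (Xg * Yg + Yg * Xg) - (Xg * Xg - 1) * Yg) := by
    simp only [combo, add_mul, smul_mul_assoc, one_mul, mul_sub, sub_mul, mul_add, mul_one,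
      smul_sub, smul_add, mul_assoc]
    module
  rw [h]
  exact S.add_mem (S.add_mem (S_smul g1_mem) (S_smul g3_mem))
    (S_smul (S.sub_mem (S.mul_mem_left _ _ g3_mem) (S.mul_mem_right _ _ g1_mem)))

private lemma combo_mul_y (a b c d : ℂ) :
    combo a b c d * Yg - combo c d a b ∈ S := by
  have h : combo a b c d * Yg - combo c d a b =
      c • (Yg * Yg - 1) + d • (Xg * (Yg * Yg - 1)) := by
    simp only [combo, add_mul, smul_mul_assoc, one_mul, mul_sub, sub_mul, mul_add, mul_one,
      smul_sub, smul_add, mul_assoc]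
    module
  rw [h]
  exact S.add_mem (S_smul g2_mem) (S_smul (S.mul_mem_left _ _ g2_mem))

private lemma combo_mul_combo (a b c d a' b' c' d' : ℂ) :
    ∃ p q r s : ℂ, combo a b c d * combo a' b' c' d' - combo p q r s ∈ S := by
  -- combo * x ≡ combo b a (-d) (-c), combo * y ≡ combo c d a b
  -- combo * (x*y) = (combo * x) * y ≡ combo b a (-d) (-c) * y ≡ combo (-d) (-c) b a
  refine ⟨a' * a + b' * b + c' * c + d' * (-d),
          a' * b + b' * a + c' * d + d' * (-c),
          a' * c + b' * (-d) + c' * a + d' * b,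
          a' * d + b' * (-c) + c' * b + d' * a, ?_⟩
  have hx := combo_mul_x a b c d
  have hy := combo_mul_y a b c d
  have hxy : combo a b c d * (Xg * Yg) - combo (-d) (-c) b a ∈ S := by
    have h1 : (combo a b c d * Xg - combo b a (-d) (-c)) * Yg ∈ S :=
      S.mul_mem_right _ _ hx
    have h2 := combo_mul_y b a (-d) (-c)
    have := S.add_mem h1 h2
    have he : (combo a b c d * Xg - combo b a (-d) (-c)) * Yg +
        (combo b a (-d) (-c) * Yg - combo (-d) (-c) b a) =
        combo a b c d * (Xg * Yg) - combo (-d) (-c) b a := by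
      rw [sub_mul, ← mul_assoc]; abel
    rwa [he] at this
  have key : combo a b c d * combo a' b' c' d' -
      combo (a' * a + b' * b + c' * c + d' * (-d))
            (a' * b + b' * a + c' * d + d' * (-c))
            (a' * c + b' * (-d) + c' * a + d' * b)
            (a' * d + b' * (-c) + c' * b + d' * a) =
      b' • (combo a b c d * Xg - combo b a (-d) (-c)) +
      c' • (combo a b c d * Yg - combo c d a b) +
      d' • (combo a b c d * (Xg * Yg) - combo (-d) (-c) b a) := by
    simp only [combo, mul_add, mul_smul_comm, mul_one, smul_add, smul_sub, smul_smul]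
    module
  rw [key]
  exact S.add_mem (S.add_mem (S_smul hx) (S_smul hy)) (S_smul hxy)

private lemma reduce (z : F) : ∃ a b c d : ℂ, z - combo a b c d ∈ S := by
  induction z with
  | grade0 r =>
      exact ⟨r, 0, 0, 0, by
        simp [combo, Algebra.algebraMap_eq_smul_one, S.zero_mem]⟩
  | grade1 i =>
      fin_cases i
      · exact ⟨0, 1, 0, 0, by simp [combo, Xg, S.zero_mem]⟩
      · exact ⟨0, 0, 1, 0, by simp [combo, Yg, S.zero_mem]⟩
  | mul z w hz hw =>
      obtain ⟨a, b, c, d, hz⟩ := hz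
      obtain ⟨a', b', c', d', hw⟩ := hw
      obtain ⟨p, q, r, s, hc⟩ := combo_mul_combo a b c d a' b' c' d'
      refine ⟨p, q, r, s, ?_⟩
      have h1 : (z - combo a b c d) * w ∈ S := S.mul_mem_right _ _ hz
      have h2 : combo a b c d * (w - combo a' b' c' d') ∈ S := S.mul_mem_left _ _ hw
      have := S.add_mem (S.add_mem h1 h2) hc
      have he : (z - combo a b c d) * w + combo a b c d * (w - combo a' b' c' d') +
          (combo a b c d * combo a' b' c' d' - combo p q r s) =
          z * w - combo p q r s := by
        rw [sub_mul, mul_sub]; abel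
      rwa [he] at this
  | add z w hz hw =>
      obtain ⟨a, b, c, d, hz⟩ := hz
      obtain ⟨a', b', c', d', hw⟩ := hw
      refine ⟨a + a', b + b', c + c', d + d', ?_⟩
      have := S.add_mem hz hw
      have he : (z - combo a b c d) + (w - combo a' b' c' d') =
          z + w - combo (a + a') (b + b') (c + c') (d + d') := by
        simp only [combo, add_smul]; abel
      rwa [he] at this

end CliffordAux

/-- The kernel of the `ℂ`-algebra homomorphism `γ : FreeAlgebra ℂ (Fin 2) → M₂(ℂ)` sending
`X₁ ↦ σ₁` and `X₂ ↦ σ₃` equals the two-sided ideal generated by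
`X₁X₁ − 1`, `X₂X₂ − 1` and `X₁X₂ + X₂X₁`. -/
theorem clifford_resolution_exact_middle :
    ∀ γ : FreeAlgebra ℂ (Fin 2) →ₐ[ℂ] Matrix (Fin 2) (Fin 2) ℂ,
      γ (FreeAlgebra.ι ℂ 0) = !![0, 1; 1, 0] →
      γ (FreeAlgebra.ι ℂ 1) = !![1, 0; 0, -1] →
      TwoSidedIdeal.ker γ =
        TwoSidedIdeal.span
          { FreeAlgebra.ι ℂ (0 : Fin 2) * FreeAlgebra.ι ℂ (0 : Fin 2) - 1,
            FreeAlgebra.ι ℂ (1 : Fin 2) * FreeAlgebra.ι ℂ (1 : Fin 2) - 1,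
            FreeAlgebra.ι ℂ (0 : Fin 2) * FreeAlgebra.ι ℂ (1 : Fin 2)
              + FreeAlgebra.ι ℂ (1 : Fin 2) * FreeAlgebra.ι ℂ (0 : Fin 2) } := by
  intro γ hx hy
  have hspan : (S : TwoSidedIdeal (FreeAlgebra ℂ (Fin 2))) = TwoSidedIdeal.span
      { FreeAlgebra.ι ℂ (0 : Fin 2) * FreeAlgebra.ι ℂ (0 : Fin 2) - 1,
        FreeAlgebra.ι ℂ (1 : Fin 2) * FreeAlgebra.ι ℂ (1 : Fin 2) - 1,
        FreeAlgebra.ι ℂ (0 : Fin 2) * FreeAlgebra.ι ℂ (1 : Fin 2)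
          + FreeAlgebra.ι ℂ (1 : Fin 2) * FreeAlgebra.ι ℂ (0 : Fin 2) } := rfl
  rw [← hspan]
  -- S ⊆ ker γ
  have hsub : ∀ z ∈ S, γ z = 0 := by
    intro z hz
    have : Sgen ⊆ {w | w ∈ TwoSidedIdeal.ker γ} := by
      intro w hw
      rcases hw with h | h | h <;> subst h <;>
        simp only [TwoSidedIdeal.mem_ker, Set.mem_setOf_eq, map_sub, map_add, map_mul,
          map_one, Xg, Yg, hx, hy] <;>
      · ext i j; fin_cases i <;> fin_cases j <;>
          simp [Matrix.mul_apply, Fin.sum_univ_succ]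
    exact (TwoSidedIdeal.mem_ker γ).mp (TwoSidedIdeal.mem_span_iff.mp hz _ this)
  ext z
  simp only [TwoSidedIdeal.mem_ker]
  constructor
  · intro hz
    obtain ⟨a, b, c, d, hmem⟩ := reduce z
    have hγ : γ (combo a b c d) = 0 := by
      have := hsub _ hmem
      rw [map_sub, hz, zero_sub, neg_eq_zero] at this
      exact this
    -- compute entries
    have hval : γ (combo a b c d) =
        a • (1 : Matrix (Fin 2) (Fin 2) ℂ) + b • !![0, 1; 1, 0] + c • !![1, 0; 0, -1]
          + d • (!![0, 1; 1, 0] * !![1, 0; 0, -1]) := by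
      simp [combo, Xg, Yg, map_add, map_smul, map_mul, map_one, hx, hy]
    rw [hval] at hγ
    have h00 := congrFun (congrFun hγ 0) 0
    have h01 := congrFun (congrFun hγ 0) 1
    have h10 := congrFun (congrFun hγ 1) 0
    have h11 := congrFun (congrFun hγ 1) 1
    simp [Matrix.mul_apply, Fin.sum_univ_succ, Matrix.one_apply] at h00 h01 h10 h11
    have ha : a = 0 := by linear_combination (h00 + h11) / 2
    have hb : b = 0 := by linear_combination (h01 + h10) / 2
    have hc : c = 0 := by linear_combination (h00 - h11) / 2
    have hd : d = 0 := by linear_combination (h10 - h01) / 2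
    have : combo a b c d = 0 := by simp [combo, ha, hb, hc, hd]
    rwa [this, sub_zero] at hmem
  · exact hsub z
end

section
/- Fix m ≥ 1 and let Q be the quadratic form on ℂ^(2m) given by Q(x) = x₁² + ⋯ + x_{2m}². Then the Clifford algebra of Q over ℂ is isomorphic as a unital ℂ-algebra to the matrix algebra M_{2^m}(ℂ) of 2^m × 2^m complex matrices. (This is the exactness of the Clifford resolution of M_{2^m}(ℂ).) -/
namespace CliffordMatrixAux

variable {m : ℕ}

/-- per-coordinate sign -/
lemma zmod2_cases (w : ZMod 2) : w = 0 ∨ w = 1 := by revert w; decide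

lemma zmod2_add_self (w : ZMod 2) : w + w = 0 := by revert w; decide

lemma pi_add_self (x : Fin m → ZMod 2) : x + x = 0 := by
  funext a; exact zmod2_add_self (x a)

lemma pi_add_add_cancel (u v : Fin m → ZMod 2) : u + v + v = u := by
  rw [add_assoc, pi_add_self, add_zero]

/-- the sign `(-1)^{z·t}` -/
def chi (z t : Fin m → ZMod 2) : ℂ :=
  ∏ a, if z a * t a = 1 then -1 else 1

lemma chi_comm (z t : Fin m → ZMod 2) : chi z t = chi t z := by
  unfold chi; exact Finset.prod_congr rfl fun a _ => by rw [mul_comm]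

lemma chi_add_right (z s t : Fin m → ZMod 2) :
    chi z (s + t) = chi z s * chi z t := by
  unfold chi
  rw [← Finset.prod_mul_distrib]
  refine Finset.prod_congr rfl fun a _ => ?_
  rcases zmod2_cases (z a) with h | h <;> rcases zmod2_cases (s a) with h1 | h1 <;>
    rcases zmod2_cases (t a) with h2 | h2 <;>
    simp [h, h1, h2, Pi.add_apply]

lemma chi_add_left (z z' t : Fin m → ZMod 2) :
    chi (z + z') t = chi z t * chi z' t := by
  rw [chi_comm, chi_add_right, chi_comm z t, chi_comm z' t]

lemma chi_zero_right (z : Fin m → ZMod 2) : chi z 0 = 1 := by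
  unfold chi
  refine Finset.prod_eq_one fun a _ => by simp

lemma chi_zero_left (t : Fin m → ZMod 2) : chi 0 t = 1 := by
  rw [chi_comm, chi_zero_right]

lemma chi_mul_self (z t : Fin m → ZMod 2) : chi z t * chi z t = 1 := by
  rw [← chi_add_right, pi_add_self, chi_zero_right]

lemma chi_ne_zero (z t : Fin m → ZMod 2) : chi z t ≠ 0 := by
  intro h
  have := chi_mul_self z t
  rw [h, mul_zero] at this
  exact zero_ne_one this

lemma chi_single_right (z : Fin m → ZMod 2) (a : Fin m) :
    chi z (Pi.single a 1) = if z a = 1 then -1 else 1 := by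
  unfold chi
  rw [Finset.prod_eq_single a]
  · simp
  · intro b _ hb; simp [Pi.single_apply, hb]
  · simp

lemma chi_single_left (z : Fin m → ZMod 2) (a : Fin m) :
    chi (Pi.single a 1) z = if z a = 1 then -1 else 1 := by
  rw [chi_comm, chi_single_right]

/-- The matrix of the operator `Z^z X^x` on functions `(Fin m → ZMod 2) → ℂ`. -/
def Pmat (x z : Fin m → ZMod 2) : Matrix (Fin m → ZMod 2) (Fin m → ZMod 2) ℂ :=
  Matrix.of fun s t => if s = t + x then chi z s else 0

lemma Pmat_apply (x z s t : Fin m → ZMod 2) :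
    Pmat x z s t = if s = t + x then chi z s else 0 := rfl

lemma Pmat_zero : (Pmat (m := m) 0 0) = 1 := by
  ext s t
  rw [Pmat_apply, Matrix.one_apply, add_zero, chi_zero_left]

lemma Pmat_mul (x z x' z' : Fin m → ZMod 2) :
    Pmat x z * Pmat x' z' = chi z' x • Pmat (x + x') (z + z') := by
  ext s t
  rw [Matrix.mul_apply, Matrix.smul_apply, Finset.sum_eq_single (s + x)]
  · rw [Pmat_apply, Pmat_apply, Pmat_apply]
    rw [if_pos (by rw [pi_add_add_cancel])]
    by_cases h : s = t + (x + x')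
    · have h2 : s + x = t + x' := by
        rw [h]; funext a
        simp only [Pi.add_apply]
        rcases zmod2_cases (x a) with h1 | h1 <;> rcases zmod2_cases (x' a) with h3 | h3 <;>
          rcases zmod2_cases (t a) with h4 | h4 <;> simp [h1, h3, h4] <;> decide
      rw [if_pos h2, if_pos h]
      rw [chi_add_right, chi_add_left, smul_eq_mul]; ring
    · have h2 : ¬ (s + x = t + x') := by
        intro hc; apply h
        have h3 : s + x + x = t + x' + x := by rw [hc]
        rw [pi_add_add_cancel] at h3
        rw [h3, add_assoc, add_comm x' x]
      rw [if_neg h2, if_neg h, mul_zero, smul_zero]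
  · intro u _ hu
    rw [Pmat_apply, if_neg, zero_mul]
    intro hc
    exact hu (by rw [hc, pi_add_add_cancel])
  · simp


/-! ### gamma matrices (Jordan–Wigner) -/

variable (m) in
/-- site index of the `i`-th gamma matrix -/
def gidx (i : Fin (2 * m)) : Fin m :=
  ⟨(i : ℕ) / 2, by omega⟩

@[simp] lemma gidx_val (i : Fin (2 * m)) : ((gidx m i : Fin m) : ℕ) = (i : ℕ) / 2 := rfl

variable (m) in
/-- flip part of the `i`-th gamma matrix -/
def gx (i : Fin (2 * m)) : Fin m → ZMod 2 :=
  Pi.single (gidx m i) 1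

variable (m) in
/-- phase part of the `i`-th gamma matrix -/
def gz (i : Fin (2 * m)) : Fin m → ZMod 2 :=
  fun b => if 2 * (b : ℕ) < (i : ℕ) then 1 else 0

variable (m) in
/-- scalar factor of the `i`-th gamma matrix -/
def gc (i : Fin (2 * m)) : ℂ := if (i : ℕ) % 2 = 1 then Complex.I else 1

variable (m) in
/-- the `i`-th gamma matrix -/
def gam (i : Fin (2 * m)) : Matrix (Fin m → ZMod 2) (Fin m → ZMod 2) ℂ :=
  gc m i • Pmat (gx m i) (gz m i)

lemma gc_ne_zero (i : Fin (2 * m)) : gc m i ≠ 0 := by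
  unfold gc; split
  · exact Complex.I_ne_zero
  · exact one_ne_zero

lemma chi_gz_gx (i j : Fin (2 * m)) :
    chi (gz m j) (gx m i) = if 2 * ((i : ℕ) / 2) < (j : ℕ) then -1 else 1 := by
  rw [gx, chi_single_right, gz]
  by_cases h : 2 * ((i : ℕ) / 2) < (j : ℕ) <;> simp [gidx_val, h]

lemma gam_sq (i : Fin (2 * m)) : gam m i * gam m i = 1 := by
  rw [gam, smul_mul_smul_comm, Pmat_mul, pi_add_self, pi_add_self, Pmat_zero,
    smul_smul, chi_gz_gx]
  have hc : gc m i * gc m i * (if 2 * ((i : ℕ) / 2) < (i : ℕ) then (-1 : ℂ) else 1) = 1 := by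
    rw [gc]
    by_cases h : (i : ℕ) % 2 = 1
    · rw [if_pos h, if_pos (by omega), Complex.I_mul_I]; norm_num
    · rw [if_neg h, if_neg (by omega)]; norm_num
  rw [hc, one_smul]

lemma gam_anticomm {i j : Fin (2 * m)} (hij : i ≠ j) :
    gam m i * gam m j = - (gam m j * gam m i) := by
  have hne : (i : ℕ) ≠ (j : ℕ) := fun h => hij (Fin.ext h)
  rw [gam, gam, smul_mul_smul_comm, smul_mul_smul_comm, Pmat_mul, Pmat_mul,
    chi_gz_gx, chi_gz_gx, add_comm (gx m j) (gx m i), add_comm (gz m j) (gz m i)]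
  have key : ((if 2 * ((i : ℕ) / 2) < (j : ℕ) then (-1 : ℂ) else 1))
      = - (if 2 * ((j : ℕ) / 2) < (i : ℕ) then (-1 : ℂ) else 1) := by
    by_cases h1 : 2 * ((i : ℕ) / 2) < (j : ℕ)
    · rw [if_pos h1, if_neg (by omega)]
    · rw [if_neg h1, if_pos (by omega), neg_neg]
  rw [key, smul_smul, smul_smul, mul_comm (gc m i) (gc m j), ← neg_smul]
  congr 1
  ring


/-! ### orthogonality and spanning -/

lemma sum_chi (u : Fin m → ZMod 2) :
    ∑ z : Fin m → ZMod 2, chi z u = if u = 0 then ((2 : ℂ) ^ m) else 0 := by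
  by_cases hu : u = 0
  · subst hu
    simp only [chi_zero_right, if_pos rfl, Finset.sum_const, Finset.card_univ, nsmul_eq_mul,
      mul_one]
    have : Fintype.card (Fin m → ZMod 2) = 2 ^ m := by
      rw [Fintype.card_fun]; simp
    rw [this]; push_cast; ring
  · rw [if_neg hu]
    obtain ⟨a, ha⟩ : ∃ a, u a ≠ 0 := by
      by_contra h; push_neg at h; exact hu (funext fun a => h a)
    have ha1 : u a = 1 := (zmod2_cases (u a)).resolve_left ha
    have h1 : (∑ z : Fin m → ZMod 2, chi z u) = - ∑ z : Fin m → ZMod 2, chi z u := by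
      calc (∑ z : Fin m → ZMod 2, chi z u)
          = ∑ z : Fin m → ZMod 2, chi (z + Pi.single a 1) u :=
            (Fintype.sum_equiv (Equiv.addRight (Pi.single a 1)) _ _ (fun z => rfl)).symm
        _ = ∑ z : Fin m → ZMod 2, - chi z u := by
            refine Finset.sum_congr rfl fun z _ => ?_
            rw [chi_add_left, chi_single_left, if_pos ha1]; ring
        _ = - ∑ z : Fin m → ZMod 2, chi z u := by rw [Finset.sum_neg_distrib]
    have h2 : (∑ z : Fin m → ZMod 2, chi z u) + ∑ z : Fin m → ZMod 2, chi z u = 0 := by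
      nth_rewrite 1 [h1]; rw [neg_add_cancel]
    exact add_self_eq_zero.mp h2

lemma stdBasis_eq_sum_Pmat (s t : Fin m → ZMod 2) :
    Matrix.single s t (1 : ℂ)
      = ((2 : ℂ) ^ m)⁻¹ • ∑ z : Fin m → ZMod 2, chi z s • Pmat (s + t) z := by
  ext s' t'
  simp only [Matrix.smul_apply, Matrix.sum_apply, Pmat_apply, smul_ite, smul_zero,
    smul_eq_mul]
  by_cases h : s' = t' + (s + t)
  · simp only [if_pos h]
    have hsum : ∑ z : Fin m → ZMod 2, chi z s * chi z s'
        = ∑ z : Fin m → ZMod 2, chi z (s + s') :=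
      Finset.sum_congr rfl fun z _ => (chi_add_right z s s').symm
    rw [hsum, sum_chi]
    by_cases hs : s' = s
    · have hss : s + s' = 0 := by rw [hs, pi_add_self]
      have ht : t' = t := by
        have h3 : t' + (s + t) + (s + t) = t' := pi_add_add_cancel _ _
        rw [← h] at h3
        rw [hs, ← add_assoc, pi_add_self, zero_add] at h3
        exact h3.symm
      rw [if_pos hss, Matrix.single, Matrix.of_apply, if_pos ⟨hs.symm, ht.symm⟩,
        inv_mul_cancel₀ (pow_ne_zero _ two_ne_zero)]
    · have hss : ¬ (s + s' = 0) := by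
        intro hc; apply hs
        have h4 : s + s' + s' = 0 + s' := by rw [hc]
        rw [pi_add_add_cancel, zero_add] at h4
        exact h4.symm
      rw [if_neg hss, mul_zero, Matrix.single, Matrix.of_apply,
        if_neg (by rintro ⟨rfl, rfl⟩; exact hs rfl)]
  · simp only [if_neg h, mul_zero, Finset.sum_const_zero, Matrix.single,
      Matrix.of_apply, mul_zero]
    rw [if_neg]
    rintro ⟨rfl, rfl⟩
    exact h (by conv_rhs => rw [add_comm s t, ← add_assoc, pi_add_self, zero_add])

/-! ### the subalgebra generated by the gamma matrices is everything -/

section Gen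

variable {S : Subalgebra ℂ (Matrix (Fin m → ZMod 2) (Fin m → ZMod 2) ℂ)}

lemma mem_of_smul_mem {c : ℂ} (hc : c ≠ 0)
    {M : Matrix (Fin m → ZMod 2) (Fin m → ZMod 2) ℂ} (h : c • M ∈ S) : M ∈ S := by
  have h2 := S.smul_mem h c⁻¹
  rwa [smul_smul, inv_mul_cancel₀ hc, one_smul] at h2

lemma top_le_of_gam_mem (hS : ∀ i : Fin (2 * m), gam m i ∈ S) :
    ∀ M : Matrix (Fin m → ZMod 2) (Fin m → ZMod 2) ℂ, M ∈ S := by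
  have hP : ∀ i, Pmat (gx m i) (gz m i) ∈ S := fun i =>
    mem_of_smul_mem (gc_ne_zero i) (hS i)
  -- single-site Z
  have hzsingle : ∀ a : Fin m, Pmat 0 (Pi.single a 1) ∈ S := by
    intro a
    have ham : 2 * (a : ℕ) + 1 < 2 * m := by omega
    set i0 : Fin (2 * m) := ⟨2 * a, by omega⟩ with hi0
    set i1 : Fin (2 * m) := ⟨2 * a + 1, by omega⟩ with hi1
    have hx0 : gx m i0 = Pi.single a 1 := by
      have hfin : gidx m i0 = a := by apply Fin.ext; simp only [gidx_val, hi0]; omega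
      rw [gx, hfin]
    have hx1 : gx m i1 = Pi.single a 1 := by
      have hfin : gidx m i1 = a := by apply Fin.ext; simp only [gidx_val, hi1]; omega
      rw [gx, hfin]
    have hzz : gz m i0 + gz m i1 = Pi.single a 1 := by
      funext b
      simp only [gz, Pi.add_apply, Pi.single_apply, hi0, hi1]
      by_cases hba : b = a
      · subst hba
        rw [if_neg (by omega), if_pos (by omega), if_pos rfl, zero_add]
      · have hne : (b : ℕ) ≠ (a : ℕ) := fun hc => hba (Fin.ext hc)
        rw [if_neg hba]
        by_cases hlt : (b : ℕ) < (a : ℕ)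
        · rw [if_pos (by omega), if_pos (by omega)]
          exact zmod2_add_self 1
        · rw [if_neg (by omega), if_neg (by omega), add_zero]
    have hmul := S.mul_mem (hP i0) (hP i1)
    rw [Pmat_mul, hx0, hx1, pi_add_self, hzz] at hmul
    exact mem_of_smul_mem (chi_ne_zero _ _) hmul
  -- all Z strings
  have hz : ∀ z : Fin m → ZMod 2, Pmat 0 z ∈ S := by
    have key : ∀ s : Finset (Fin m), ∀ z, (∀ b, b ∉ s → z b = 0) → Pmat 0 z ∈ S := by
      intro s
      induction s using Finset.induction_on with
      | empty =>
        intro z hz0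
        have hz1 : z = 0 := funext fun b => hz0 b (by simp)
        rw [hz1, Pmat_zero]; exact S.one_mem
      | @insert a s' ha IH =>
        intro z hsupp
        have hdecomp : z = Pi.single a (z a) + Function.update z a 0 := by
          funext b
          by_cases hb : b = a
          · subst hb; simp
          · rw [Pi.add_apply, Pi.single_eq_of_ne hb, Function.update_of_ne hb, zero_add]
        have h1 : Pmat 0 (Pi.single a (z a)) ∈ S := by
          rcases zmod2_cases (z a) with h | h
          · rw [h, Pi.single_zero, Pmat_zero]; exact S.one_mem
          · rw [h]; exact hzsingle a
        have h2 : Pmat 0 (Function.update z a 0) ∈ S := by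
          refine IH _ (fun b hb => ?_)
          by_cases hba : b = a
          · subst hba; rw [Function.update_self]
          · rw [Function.update_of_ne hba]
            exact hsupp b (by simp [hba, hb])
        have h3 := S.mul_mem h1 h2
        rwa [Pmat_mul, chi_zero_right, one_smul, add_zero, ← hdecomp] at h3
    exact fun z => key Finset.univ z fun b hb => absurd (Finset.mem_univ b) hb
  -- single-site X
  have hxsingle : ∀ a : Fin m, Pmat (Pi.single a 1) 0 ∈ S := by
    intro a
    have ham : 2 * (a : ℕ) < 2 * m := by omega
    set i0 : Fin (2 * m) := ⟨2 * a, by omega⟩ with hi0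
    have hx0 : gx m i0 = Pi.single a 1 := by
      have hfin : gidx m i0 = a := by apply Fin.ext; simp only [gidx_val, hi0]; omega
      rw [gx, hfin]
    have hmul := S.mul_mem (hP i0) (hz (gz m i0))
    rw [Pmat_mul, add_zero, pi_add_self, hx0] at hmul
    exact mem_of_smul_mem (chi_ne_zero _ _) hmul
  -- all X strings
  have hx : ∀ x : Fin m → ZMod 2, Pmat x 0 ∈ S := by
    have key : ∀ s : Finset (Fin m), ∀ x, (∀ b, b ∉ s → x b = 0) → Pmat x 0 ∈ S := by
      intro s
      induction s using Finset.induction_on with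
      | empty =>
        intro x hx0
        have hx1 : x = 0 := funext fun b => hx0 b (by simp)
        rw [hx1, Pmat_zero]; exact S.one_mem
      | @insert a s' ha IH =>
        intro x hsupp
        have hdecomp : x = Pi.single a (x a) + Function.update x a 0 := by
          funext b
          by_cases hb : b = a
          · subst hb; simp
          · rw [Pi.add_apply, Pi.single_eq_of_ne hb, Function.update_of_ne hb, zero_add]
        have h1 : Pmat (Pi.single a (x a)) 0 ∈ S := by
          rcases zmod2_cases (x a) with h | h
          · rw [h, Pi.single_zero, Pmat_zero]; exact S.one_mem
          · rw [h]; exact hxsingle a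
        have h2 : Pmat (Function.update x a 0) 0 ∈ S := by
          refine IH _ (fun b hb => ?_)
          by_cases hba : b = a
          · subst hba; rw [Function.update_self]
          · rw [Function.update_of_ne hba]
            exact hsupp b (by simp [hba, hb])
        have h3 := S.mul_mem h1 h2
        rwa [Pmat_mul, chi_zero_left, one_smul, add_zero, ← hdecomp] at h3
    exact fun x => key Finset.univ x fun b hb => absurd (Finset.mem_univ b) hb
  -- all Pauli strings
  have hall : ∀ x z : Fin m → ZMod 2, Pmat x z ∈ S := by
    intro x z
    have hmul := S.mul_mem (hx x) (hz z)
    rw [Pmat_mul, add_zero, zero_add] at hmul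
    exact mem_of_smul_mem (chi_ne_zero _ _) hmul
  -- conclude
  intro M
  rw [Matrix.matrix_eq_sum_single M]
  refine S.sum_mem fun s _ => S.sum_mem fun t _ => ?_
  have hsb : Matrix.single s t (M s t) = M s t • Matrix.single s t (1 : ℂ) := by
    rw [Matrix.smul_single, smul_eq_mul, mul_one]
  rw [hsb, stdBasis_eq_sum_Pmat]
  exact S.smul_mem (S.smul_mem (S.sum_mem fun z _ => S.smul_mem (hall _ _) _) _) _

end Gen


open CliffordAlgebra

variable {m : ℕ} (Q : QuadraticForm ℂ (Fin (2 * m) → ℂ))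

/-- standard basis vector -/
def Evec (i : Fin (2 * m)) : Fin (2 * m) → ℂ := Pi.single i 1

variable (hQ : ∀ x, Q x = ∑ i, x i ^ 2)

include hQ in
lemma Q_Evec (i : Fin (2 * m)) : Q (Evec i) = 1 := by
  rw [hQ]
  simp [Evec, Pi.single_apply]

include hQ in
lemma polar_Evec {i j : Fin (2 * m)} (hij : i ≠ j) :
    QuadraticMap.polar Q (Evec i) (Evec j) = 0 := by
  have hz : ∀ k, Evec i k * Evec j k = 0 := by
    intro k
    simp only [Evec, Pi.single_apply]
    by_cases h1 : k = i
    · subst h1; rw [if_pos rfl, if_neg hij, mul_zero]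
    · rw [if_neg h1, zero_mul]
  rw [QuadraticMap.polar, hQ, hQ, hQ]
  have key : ∀ k, ((Evec i + Evec j) k) ^ 2
      = (Evec i k) ^ 2 + (Evec j k) ^ 2 + 2 * (Evec i k * Evec j k) := by
    intro k; rw [Pi.add_apply]; ring
  rw [Finset.sum_congr rfl fun k _ => key k]
  simp only [hz, mul_zero, add_zero]
  rw [Finset.sum_add_distrib]
  ring

include hQ in
lemma iota_anticomm {i j : Fin (2 * m)} (hij : i ≠ j) :
    ι Q (Evec i) * ι Q (Evec j) = - (ι Q (Evec j) * ι Q (Evec i)) := by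
  have h := CliffordAlgebra.ι_mul_ι_comm (Q := Q) (Evec i) (Evec j)
  rwa [polar_Evec Q hQ hij, map_zero, zero_sub] at h

include hQ in
lemma iota_sq (i : Fin (2 * m)) :
    ι Q (Evec i) * ι Q (Evec i) = 1 := by
  rw [CliffordAlgebra.ι_sq_scalar, Q_Evec Q hQ, map_one]

/-- product of generators along a list -/
noncomputable def PC (l : List (Fin (2 * m))) : CliffordAlgebra Q :=
  (l.map fun i => ι Q (Evec i)).prod

lemma PC_nil : PC Q [] = 1 := rfl

lemma PC_cons (j : Fin (2 * m)) (l : List (Fin (2 * m))) :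
    PC Q (j :: l) = ι Q (Evec j) * PC Q l := by
  simp [PC]

/-- monomial attached to a finset -/
noncomputable def PS (s : Finset (Fin (2 * m))) : CliffordAlgebra Q :=
  PC Q (s.sort (· ≤ ·))

lemma PS_empty : PS Q ∅ = 1 := by
  rw [PS, Finset.sort_empty, PC_nil]

lemma PS_insert {j : Fin (2 * m)} {s : Finset (Fin (2 * m))}
    (h1 : ∀ b ∈ s, j ≤ b) (h2 : j ∉ s) :
    PS Q (insert j s) = ι Q (Evec j) * PS Q s := by
  rw [PS, Finset.sort_insert (r := (· ≤ ·)) h1 h2, PC_cons, PS]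

lemma PS_min {s : Finset (Fin (2 * m))} (hs : s.Nonempty) :
    PS Q s = ι Q (Evec (s.min' hs)) * PS Q (s.erase (s.min' hs)) := by
  conv_lhs => rw [← Finset.insert_erase (Finset.min'_mem s hs)]
  rw [PS_insert]
  · intro b hb
    exact Finset.min'_le s b (Finset.mem_of_mem_erase hb)
  · exact Finset.notMem_erase _ _

/-- the span of the monomials -/
noncomputable def TT : Submodule ℂ (CliffordAlgebra Q) :=
  Submodule.span ℂ (Set.range (PS Q))

lemma PS_mem (s : Finset (Fin (2 * m))) : PS Q s ∈ TT Q :=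
  Submodule.subset_span ⟨s, rfl⟩

include hQ in
/-- key reduction: multiplying a monomial by a generator gives (a multiple of) a monomial -/
lemma iota_mul_PS (n : ℕ) : ∀ s : Finset (Fin (2 * m)), s.card ≤ n → ∀ j,
    ∃ c : ℂ, ι Q (Evec j) * PS Q s
      = c • PS Q (if j ∈ s then s.erase j else insert j s) := by
  induction n with
  | zero =>
    intro s hs j
    have : s = ∅ := Finset.card_eq_zero.mp (Nat.le_zero.mp hs)
    subst this
    refine ⟨1, ?_⟩
    rw [PS_empty, mul_one, if_neg (Finset.notMem_empty j), one_smul,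
      PS_insert Q (by simp) (Finset.notMem_empty j), PS_empty, mul_one]
  | succ n IH =>
    intro s hs j
    rcases Finset.eq_empty_or_nonempty s with rfl | hne
    · refine ⟨1, ?_⟩
      rw [PS_empty, mul_one, if_neg (Finset.notMem_empty j), one_smul,
        PS_insert Q (by simp) (Finset.notMem_empty j), PS_empty, mul_one]
    · set i := s.min' hne with hi
      have him : i ∈ s := Finset.min'_mem s hne
      rcases lt_trichotomy j i with hji | hji | hji
      · -- j < min
        have hjs : j ∉ s := fun hj => absurd (Finset.min'_le s j hj) (not_le.mpr hji)
        refine ⟨1, ?_⟩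
        rw [if_neg hjs, one_smul, PS_insert Q (fun b hb => le_of_lt
          (lt_of_lt_of_le hji (Finset.min'_le s b hb))) hjs]
      · -- j = min
        subst hji
        refine ⟨1, ?_⟩
        rw [if_pos him, one_smul, PS_min Q hne, ← mul_assoc, iota_sq Q hQ, one_mul, hi]
      · -- j > min
        have hij : i ≠ j := ne_of_lt hji
        have hcard : (s.erase i).card ≤ n := by
          rw [Finset.card_erase_of_mem him]; omega
        obtain ⟨c', hc'⟩ := IH (s.erase i) hcard j
        have hmem_t' : ∀ b ∈ (if j ∈ s.erase i then (s.erase i).erase j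
            else insert j (s.erase i)), i < b := by
          intro b hb
          have hbs : b = j ∨ b ∈ s.erase i := by
            by_cases hjmem : j ∈ s.erase i
            · rw [if_pos hjmem] at hb
              exact Or.inr (Finset.mem_of_mem_erase hb)
            · rw [if_neg hjmem] at hb
              exact Finset.mem_insert.mp hb
          rcases hbs with rfl | hbs
          · exact hji
          · have hbmem : b ∈ s := Finset.mem_of_mem_erase hbs
            have hbne : b ≠ i := Finset.ne_of_mem_erase hbs
            exact lt_of_le_of_ne (Finset.min'_le s b hbmem) (Ne.symm hbne)
        have hit' : i ∉ (if j ∈ s.erase i then (s.erase i).erase j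
            else insert j (s.erase i)) := fun h => lt_irrefl i (hmem_t' i h)
        have heq : ι Q (Evec j) * PS Q s = (-c') • PS Q (insert i
            (if j ∈ s.erase i then (s.erase i).erase j else insert j (s.erase i))) := by
          rw [PS_min Q hne, ← hi, ← mul_assoc, iota_anticomm Q hQ (Ne.symm hij),
            neg_mul, mul_assoc, hc', mul_smul_comm,
            PS_insert Q (fun b hb => le_of_lt (hmem_t' b hb)) hit', neg_smul]
        refine ⟨-c', ?_⟩
        rw [heq]
        congr 2
        -- show target finset equality
        by_cases hjm : j ∈ s
        · have hjm' : j ∈ s.erase i := Finset.mem_erase.mpr ⟨Ne.symm hij, hjm⟩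
          rw [if_pos hjm, if_pos hjm']
          ext b
          simp only [Finset.mem_insert, Finset.mem_erase]
          constructor
          · rintro (rfl | ⟨hbj, hbi, hbs⟩)
            · exact ⟨hij, him⟩
            · exact ⟨hbj, hbs⟩
          · rintro ⟨hbj, hbs⟩
            by_cases hbi : b = i
            · exact Or.inl hbi
            · exact Or.inr ⟨hbj, hbi, hbs⟩
        · have hjm' : j ∉ s.erase i := fun h => hjm (Finset.mem_of_mem_erase h)
          rw [if_neg hjm, if_neg hjm', Finset.insert_comm, Finset.insert_erase him]


include hQ in
lemma iota_mul_mem (j : Fin (2 * m)) : ∀ x ∈ TT Q, ι Q (Evec j) * x ∈ TT Q := by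
  intro x hx
  induction hx using Submodule.span_induction with
  | mem y hy =>
    obtain ⟨s, rfl⟩ := hy
    obtain ⟨c, hc⟩ := iota_mul_PS Q hQ s.card s le_rfl j
    rw [hc]
    exact Submodule.smul_mem _ _ (PS_mem Q _)
  | zero => rw [mul_zero]; exact Submodule.zero_mem _
  | add y z hy hz hy' hz' => rw [mul_add]; exact Submodule.add_mem _ hy' hz'
  | smul c y hy hy' => rw [mul_smul_comm]; exact Submodule.smul_mem _ _ hy'

include hQ in
lemma PC_mul_mem (l : List (Fin (2 * m))) : ∀ x ∈ TT Q, PC Q l * x ∈ TT Q := by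
  induction l with
  | nil => intro x hx; rw [PC_nil, one_mul]; exact hx
  | cons j l IH =>
    intro x hx
    rw [PC_cons, mul_assoc]
    exact iota_mul_mem Q hQ j _ (IH x hx)

include hQ in
lemma mul_mem_TT {a b : CliffordAlgebra Q} (ha : a ∈ TT Q) (hb : b ∈ TT Q) :
    a * b ∈ TT Q := by
  induction ha using Submodule.span_induction with
  | mem y hy =>
    obtain ⟨s, rfl⟩ := hy
    exact PC_mul_mem Q hQ _ b hb
  | zero => rw [zero_mul]; exact Submodule.zero_mem _
  | add y z hy hz hy' hz' => rw [add_mul]; exact Submodule.add_mem _ hy' hz'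
  | smul c y hy hy' => rw [smul_mul_assoc]; exact Submodule.smul_mem _ _ hy'

include hQ in
lemma TT_top : ∀ x : CliffordAlgebra Q, x ∈ TT Q := by
  intro x
  induction x using CliffordAlgebra.induction with
  | algebraMap r =>
    rw [Algebra.algebraMap_eq_smul_one]
    refine Submodule.smul_mem _ _ ?_
    rw [← PS_empty Q]
    exact PS_mem Q _
  | ι v =>
    have hv : v = ∑ i, v i • Evec i := by
      funext j
      rw [Finset.sum_apply]
      simp [Evec, Pi.single_apply]
    rw [hv, map_sum]
    refine Submodule.sum_mem _ fun i _ => ?_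
    rw [map_smul]
    refine Submodule.smul_mem _ _ ?_
    have hsing : ι Q (Evec i) = PS Q {i} := by
      rw [PS, Finset.sort_singleton, PC_cons, PC_nil, mul_one]
    rw [hsing]
    exact PS_mem Q _
  | mul a b ha hb => exact mul_mem_TT Q hQ ha hb
  | add a b ha hb => exact Submodule.add_mem _ ha hb

/-! ### the representation -/

variable (m) in
/-- the linear map sending basis vectors to gamma matrices -/
noncomputable def gmap : (Fin (2 * m) → ℂ) →ₗ[ℂ]
    Matrix (Fin m → ZMod 2) (Fin m → ZMod 2) ℂ where
  toFun v := ∑ i, v i • gam m i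
  map_add' u v := by simp [add_smul, Finset.sum_add_distrib]
  map_smul' c v := by simp [smul_smul, Finset.smul_sum]

lemma gam_pair (i j : Fin (2 * m)) :
    gam m i * gam m j + gam m j * gam m i
      = if i = j then ((1 : Matrix (Fin m → ZMod 2) (Fin m → ZMod 2) ℂ) + 1) else 0 := by
  by_cases h : i = j
  · subst h; rw [if_pos rfl, gam_sq]
  · rw [if_neg h, gam_anticomm h, neg_add_cancel]

include hQ in
lemma gmap_sq (v : Fin (2 * m) → ℂ) :
    gmap m v * gmap m v = algebraMap ℂ _ (Q v) := by
  have hL : gmap m v * gmap m v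
      = ∑ i, ∑ j, (v i * v j) • (gam m i * gam m j) := by
    show (∑ i, v i • gam m i) * (∑ j, v j • gam m j) = _
    rw [Finset.sum_mul_sum]
    exact Finset.sum_congr rfl fun i _ => Finset.sum_congr rfl fun j _ =>
      smul_mul_smul_comm (v i) (gam m i) (v j) (gam m j)
  have hswap : (∑ i, ∑ j, (v i * v j) • (gam m i * gam m j))
      = ∑ i, ∑ j, (v i * v j) • (gam m j * gam m i) := by
    rw [Finset.sum_comm]
    exact Finset.sum_congr rfl fun i _ => Finset.sum_congr rfl fun j _ => by
      rw [mul_comm (v j) (v i)]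
  have hdouble : (∑ i, ∑ j, (v i * v j) • (gam m i * gam m j))
        + (∑ i, ∑ j, (v i * v j) • (gam m i * gam m j))
      = (∑ i, v i ^ 2) • (1 : Matrix (Fin m → ZMod 2) (Fin m → ZMod 2) ℂ)
        + (∑ i, v i ^ 2) • 1 := by
    nth_rewrite 2 [hswap]
    rw [← Finset.sum_add_distrib]
    have hstep : ∀ i : Fin (2 * m),
        ((∑ j, (v i * v j) • (gam m i * gam m j)) + ∑ j, (v i * v j) • (gam m j * gam m i))
          = (v i ^ 2) • (1 : Matrix (Fin m → ZMod 2) (Fin m → ZMod 2) ℂ) + (v i ^ 2) • 1 := by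
      intro i
      rw [← Finset.sum_add_distrib]
      have : ∀ j : Fin (2 * m),
          ((v i * v j) • (gam m i * gam m j) + (v i * v j) • (gam m j * gam m i))
            = (v i * v j) • (if i = j then
                ((1 : Matrix (Fin m → ZMod 2) (Fin m → ZMod 2) ℂ) + 1) else 0) := by
        intro j; rw [← smul_add, gam_pair]
      rw [Finset.sum_congr rfl fun j _ => this j, Finset.sum_eq_single i]
      · rw [if_pos rfl, smul_add, sq]
      · intro j _ hj; rw [if_neg (Ne.symm hj), smul_zero]
      · simp
    rw [Finset.sum_congr rfl fun i _ => hstep i, Finset.sum_add_distrib, Finset.sum_smul]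
  have h2 : (2 : ℂ) • (∑ i, ∑ j, (v i * v j) • (gam m i * gam m j))
      = (2 : ℂ) • ((∑ i, v i ^ 2) • (1 : Matrix (Fin m → ZMod 2) (Fin m → ZMod 2) ℂ)) := by
    rw [two_smul, two_smul, hdouble]
  have h3 : (∑ i, ∑ j, (v i * v j) • (gam m i * gam m j))
      = (∑ i, v i ^ 2) • (1 : Matrix (Fin m → ZMod 2) (Fin m → ZMod 2) ℂ) := by
    have h4 := congrArg (fun M => ((2 : ℂ)⁻¹) • M) h2
    simpa [smul_smul, inv_mul_cancel₀ (two_ne_zero' ℂ)] using h4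
  rw [hL, h3, hQ, Algebra.algebraMap_eq_smul_one]

variable (m) in
/-- the representation of the Clifford algebra on the spinor space -/
noncomputable def phi : CliffordAlgebra Q →ₐ[ℂ]
    Matrix (Fin m → ZMod 2) (Fin m → ZMod 2) ℂ :=
  CliffordAlgebra.lift Q ⟨gmap m, gmap_sq Q hQ⟩

include hQ in
lemma phi_iota (i : Fin (2 * m)) : phi m Q hQ (ι Q (Evec i)) = gam m i := by
  rw [phi, CliffordAlgebra.lift_ι_apply]
  show ∑ j, (Evec i j) • gam m j = gam m i
  rw [Finset.sum_eq_single i]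
  · rw [Evec, Pi.single_eq_same, one_smul]
  · intro j _ hj; rw [Evec, Pi.single_eq_of_ne hj, zero_smul]
  · simp

include hQ in
lemma phi_surjective : Function.Surjective (phi m Q hQ) := by
  intro M
  exact top_le_of_gam_mem (S := (phi m Q hQ).range)
    (fun i => ⟨ι Q (Evec i), phi_iota Q hQ i⟩) M

include hQ in
lemma L_surjective :
    Function.Surjective (Fintype.linearCombination ℂ (PS Q) :
      (Finset (Fin (2 * m)) → ℂ) →ₗ[ℂ] CliffordAlgebra Q) := by
  rw [← LinearMap.range_eq_top, Fintype.range_linearCombination, eq_top_iff]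
  intro x _
  exact TT_top Q hQ x

include hQ in
lemma clifford_finite : Module.Finite ℂ (CliffordAlgebra Q) :=
  Module.Finite.of_surjective _ (L_surjective Q hQ)

include hQ in
lemma clifford_finrank_le :
    Module.finrank ℂ (CliffordAlgebra Q) ≤ 2 ^ (2 * m) := by
  have h := LinearMap.finrank_range_le (Fintype.linearCombination ℂ (PS Q) :
      (Finset (Fin (2 * m)) → ℂ) →ₗ[ℂ] CliffordAlgebra Q)
  rw [LinearMap.range_eq_top.mpr (L_surjective Q hQ), finrank_top, Module.finrank_pi,
    Fintype.card_finset, Fintype.card_fin] at h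
  exact h

include hQ in
lemma phi_injective : Function.Injective (phi m Q hQ) := by
  have : Module.Finite ℂ (CliffordAlgebra Q) := clifford_finite Q hQ
  have hrank := LinearMap.finrank_range_add_finrank_ker (phi m Q hQ).toLinearMap
  have hr : LinearMap.range (phi m Q hQ).toLinearMap = ⊤ :=
    LinearMap.range_eq_top.mpr (phi_surjective Q hQ)
  rw [hr, finrank_top] at hrank
  have hM : Module.finrank ℂ (Matrix (Fin m → ZMod 2) (Fin m → ZMod 2) ℂ) = 2 ^ (2 * m) := by
    rw [Module.finrank_matrix, Module.finrank_self, mul_one, Fintype.card_fun, ZMod.card,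
      Fintype.card_fin, ← pow_add, two_mul]
  have hle := clifford_finrank_le Q hQ
  have hker : Module.finrank ℂ (LinearMap.ker (phi m Q hQ).toLinearMap) = 0 := by omega
  have hbot : LinearMap.ker (phi m Q hQ).toLinearMap = ⊥ :=
    Submodule.finrank_eq_zero.mp hker
  exact LinearMap.ker_eq_bot.mp hbot

end CliffordMatrixAux

/-- For `m ≥ 1` and the quadratic form `Q(x) = x₁² + ⋯ + x_{2m}²` on `ℂ^(2m)`, the Clifford
algebra of `Q` is isomorphic as a unital `ℂ`-algebra to `M_{2^m}(ℂ)`. -/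
theorem clifford_algebra_iso_matrix (m : ℕ) (hm : 1 ≤ m)
    (Q : QuadraticForm ℂ (Fin (2 * m) → ℂ))
    (hQ : ∀ x, Q x = ∑ i, x i ^ 2) :
    Nonempty (CliffordAlgebra Q ≃ₐ[ℂ] Matrix (Fin (2 ^ m)) (Fin (2 ^ m)) ℂ) := by
  classical
  let e1 : CliffordAlgebra Q ≃ₐ[ℂ] Matrix (Fin m → ZMod 2) (Fin m → ZMod 2) ℂ :=
    AlgEquiv.ofBijective (CliffordMatrixAux.phi m Q hQ)
      ⟨CliffordMatrixAux.phi_injective Q hQ, CliffordMatrixAux.phi_surjective Q hQ⟩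
  have hcard : Fintype.card (Fin m → ZMod 2) = 2 ^ m := by
    rw [Fintype.card_fun, ZMod.card, Fintype.card_fin]
  let e : (Fin m → ZMod 2) ≃ Fin (2 ^ m) := Fintype.equivFinOfCardEq hcard
  exact ⟨e1.trans (Matrix.reindexAlgEquiv ℂ ℂ e)⟩
end

section
/- Fix m ≥ 1. There exists a family e : Fin (2m) → M_{2^m}(ℂ) of 2m matrices satisfying the Clifford relations e_k e_l + e_l e_k = 2·δ_{kl}·1 for all k, l (where δ_{kl} is the Kronecker delta), such that the unital ℂ-subalgebra generated by the range of e is all of M_{2^m}(ℂ). -/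
open Matrix Kronecker
noncomputable section
def σx : Matrix (Fin 2) (Fin 2) ℂ := !![0, 1; 1, 0]
def σy : Matrix (Fin 2) (Fin 2) ℂ := !![0, -Complex.I; Complex.I, 0]
def σz : Matrix (Fin 2) (Fin 2) ℂ := !![1, 0; 0, -1]

theorem hxx : σx * σx = 1 := by
  ext i j; fin_cases i <;> fin_cases j <;>
    simp [σx, Matrix.mul_apply, Fin.sum_univ_two, Matrix.one_apply]

theorem hyy : σy * σy = 1 := by
  ext i j; fin_cases i <;> fin_cases j <;>
    simp [σy, Matrix.mul_apply, Fin.sum_univ_two, Matrix.one_apply, Complex.I_mul_I]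

theorem hzz : σz * σz = 1 := by
  ext i j; fin_cases i <;> fin_cases j <;>
    simp [σz, Matrix.mul_apply, Fin.sum_univ_two, Matrix.one_apply]

theorem hxy : σx * σy + σy * σx = 0 := by
  ext i j; fin_cases i <;> fin_cases j <;>
    simp [σx, σy, Matrix.mul_apply, Fin.sum_univ_two]

theorem hxz : σx * σz + σz * σx = 0 := by
  ext i j; fin_cases i <;> fin_cases j <;>
    simp [σx, σz, Matrix.mul_apply, Fin.sum_univ_two]

theorem hyz : σy * σz + σz * σy = 0 := by
  ext i j; fin_cases i <;> fin_cases j <;>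
    simp [σy, σz, Matrix.mul_apply, Fin.sum_univ_two]

theorem hz_eq : σz = (-Complex.I) • (σx * σy) := by
  ext i j; fin_cases i <;> fin_cases j <;>
    simp [σx, σy, σz, Matrix.mul_apply, Fin.sum_univ_two, Complex.I_mul_I] <;> ring_nf <;>
    simp [Complex.I_sq] <;> ring

theorem hE00 : single (0:Fin 2) 0 (1:ℂ) = (2:ℂ)⁻¹ • (1 + σz) := by
  ext i j; fin_cases i <;> fin_cases j <;>
    simp [σz, Matrix.single, Matrix.one_apply] <;> norm_num

theorem hE01 : single (0:Fin 2) 1 (1:ℂ) = single 0 0 1 * σx := by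
  ext i j; fin_cases i <;> fin_cases j <;>
    simp [σx, Matrix.single, Matrix.mul_apply, Fin.sum_univ_two, Matrix.vecHead, Matrix.vecTail]

theorem hE10 : single (1:Fin 2) 0 (1:ℂ) = σx * single 0 0 1 := by
  ext i j; fin_cases i <;> fin_cases j <;>
    simp [σx, Matrix.single, Matrix.mul_apply, Fin.sum_univ_two, Matrix.vecHead, Matrix.vecTail]

theorem hE11 : single (1:Fin 2) 1 (1:ℂ) = σx * single 0 0 1 * σx := by
  ext i j; fin_cases i <;> fin_cases j <;>
    simp [σx, Matrix.single, Matrix.mul_apply, Fin.sum_univ_two, Matrix.vecHead, Matrix.vecTail]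

theorem subalg_top {n : Type*} [Fintype n] [DecidableEq n]
    (T : Subalgebra ℂ (Matrix n n ℂ)) (h : ∀ i j, single i j (1:ℂ) ∈ T) : T = ⊤ := by
  rw [eq_top_iff]
  rintro x -
  rw [matrix_eq_sum_single x]
  refine Subalgebra.sum_mem _ fun i _ => Subalgebra.sum_mem _ fun j _ => ?_
  have : single i j (x i j) = x i j • single i j 1 := by
    ext i' j'; simp [single]
  rw [this]
  exact T.smul_mem (h i j) _

def kronL (p q : Type*) [Fintype p] [DecidableEq p] [Fintype q] [DecidableEq q] :
    Matrix p p ℂ →ₐ[ℂ] Matrix (p × q) (p × q) ℂ where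
  toFun a := a ⊗ₖ 1
  map_one' := one_kronecker_one
  map_mul' a b := by show (a*b) ⊗ₖ (1:Matrix q q ℂ) = _; rw [← mul_kronecker_mul, one_mul]
  map_zero' := zero_kronecker 1
  map_add' a b := add_kronecker a b 1
  commutes' c := by
    simp only [Algebra.algebraMap_eq_smul_one, smul_kronecker, one_kronecker_one]

def kronR (p q : Type*) [Fintype p] [DecidableEq p] [Fintype q] [DecidableEq q] :
    Matrix q q ℂ →ₐ[ℂ] Matrix (p × q) (p × q) ℂ where
  toFun b := 1 ⊗ₖ b
  map_one' := one_kronecker_one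
  map_mul' a b := by show (1:Matrix p p ℂ) ⊗ₖ (a*b) = _; rw [← mul_kronecker_mul, one_mul]
  map_zero' := kronecker_zero 1
  map_add' a b := kronecker_add 1 a b
  commutes' c := by
    simp only [Algebra.algebraMap_eq_smul_one, kronecker_smul, one_kronecker_one]

theorem stdBasis_kron {p q : Type*} [DecidableEq p] [DecidableEq q] (i j : p) (a b : q) :
    (single i j (1:ℂ)) ⊗ₖ (single a b 1) = single (i,a) (j,b) 1 := by
  ext ⟨i', a'⟩ ⟨j', b'⟩
  simp only [single, of_apply, kroneckerMap_apply, Prod.mk.injEq]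
  split_ifs <;> simp_all <;> tauto

theorem pauli_gen (A : Subalgebra ℂ (Matrix (Fin 2) (Fin 2) ℂ))
    (hx : σx ∈ A) (hy : σy ∈ A) : A = ⊤ := by
  have hz : σz ∈ A := by rw [hz_eq]; exact A.smul_mem (A.mul_mem hx hy) _
  have h00 : single (0:Fin 2) 0 (1:ℂ) ∈ A := by
    rw [hE00]; exact A.smul_mem (A.add_mem A.one_mem hz) _
  apply subalg_top
  intro i j
  fin_cases i <;> fin_cases j <;> simp only [Fin.zero_eta, Fin.mk_one, id_eq]
  · exact h00
  · rw [hE01]; exact A.mul_mem h00 hx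
  · rw [hE10]; exact A.mul_mem hx h00
  · rw [hE11]; exact A.mul_mem (A.mul_mem hx h00) hx

theorem kron_old_old {q : Type*} [Fintype q] [DecidableEq q] (a b : Matrix q q ℂ) :
    (σz ⊗ₖ a) * (σz ⊗ₖ b) + (σz ⊗ₖ b) * (σz ⊗ₖ a)
      = (1 : Matrix (Fin 2) (Fin 2) ℂ) ⊗ₖ (a * b + b * a) := by
  rw [← mul_kronecker_mul, ← mul_kronecker_mul, hzz, ← kronecker_add]

theorem kron_mixed {q : Type*} [Fintype q] [DecidableEq q] (c : Matrix (Fin 2) (Fin 2) ℂ)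
    (hc : σz * c + c * σz = 0) (a : Matrix q q ℂ) :
    (σz ⊗ₖ a) * (c ⊗ₖ 1) + (c ⊗ₖ 1) * (σz ⊗ₖ a) = 0 := by
  rw [← mul_kronecker_mul, ← mul_kronecker_mul, mul_one, one_mul, ← add_kronecker, hc,
    zero_kronecker]

theorem kron_new_new {q : Type*} [Fintype q] [DecidableEq q] (c d : Matrix (Fin 2) (Fin 2) ℂ) :
    (c ⊗ₖ 1) * (d ⊗ₖ 1) + (d ⊗ₖ 1) * (c ⊗ₖ 1) = (c * d + d * c) ⊗ₖ (1 : Matrix q q ℂ) := by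
  rw [← mul_kronecker_mul, ← mul_kronecker_mul, one_mul, ← add_kronecker]

/-- For `m ≥ 1` there is a family `e : Fin (2m) → M_{2^m}(ℂ)` of matrices satisfying the
Clifford relations `e_k e_l + e_l e_k = 2·δ_{kl}·1`, whose range generates `M_{2^m}(ℂ)` as a
unital `ℂ`-algebra. -/
theorem exists_clifford_generators_matrix (m : ℕ) (hm : 1 ≤ m) :
    ∃ e : Fin (2 * m) → Matrix (Fin (2 ^ m)) (Fin (2 ^ m)) ℂ,
      (∀ k l, e k * e l + e l * e k =
        if k = l then (2 : ℂ) • (1 : Matrix (Fin (2 ^ m)) (Fin (2 ^ m)) ℂ) else 0) ∧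
      Algebra.adjoin ℂ (Set.range e) = ⊤ := by
  induction m, hm using Nat.le_induction with
  | base =>
    refine ⟨![σx, σy], ?_, ?_⟩
    · intro k l
      fin_cases k <;> fin_cases l <;>
        simp only [Matrix.cons_val_zero, Matrix.cons_val_one, Matrix.head_cons, Fin.zero_eta,
          Fin.mk_one, if_true, if_false, reduceIte, Fin.mk.injEq]
      · rw [hxx, two_smul]
      · exact hxy
      · rw [add_comm]; exact hxy
      · rw [hyy, two_smul]
    · apply pauli_gen
      · exact Algebra.subset_adjoin ⟨0, rfl⟩
      · exact Algebra.subset_adjoin ⟨1, rfl⟩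
  | succ n hn ih =>
    obtain ⟨e, he, hgen⟩ := ih
    have h2 : 2 * 2 ^ n = 2 ^ (n + 1) := by rw [pow_succ]; ring
    set ψ : Matrix (Fin 2 × Fin (2 ^ n)) (Fin 2 × Fin (2 ^ n)) ℂ
        ≃ₐ[ℂ] Matrix (Fin (2 ^ (n + 1))) (Fin (2 ^ (n + 1))) ℂ :=
      Matrix.reindexAlgEquiv ℂ ℂ (finProdFinEquiv.trans (finCongr h2)) with hψ
    set f : Fin (2 * (n + 1)) → Matrix (Fin 2 × Fin (2 ^ n)) (Fin 2 × Fin (2 ^ n)) ℂ :=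
      fun k => if h : (k : ℕ) < 2 * n then σz ⊗ₖ e ⟨k, h⟩
        else if (k : ℕ) = 2 * n then σx ⊗ₖ 1 else σy ⊗ₖ 1 with hfdef
    have hf : ∀ k l, f k * f l + f l * f k = if k = l then
        (2 : ℂ) • (1 : Matrix (Fin 2 × Fin (2 ^ n)) (Fin 2 × Fin (2 ^ n)) ℂ) else 0 := by
      intro k l
      have hk2 : (k : ℕ) < 2 * (n + 1) := k.isLt
      have hl2 : (l : ℕ) < 2 * (n + 1) := l.isLt
      by_cases hk : (k : ℕ) < 2 * n <;> by_cases hl : (l : ℕ) < 2 * n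
      · simp only [hfdef, dif_pos hk, dif_pos hl]
        rw [kron_old_old, he]
        rcases eq_or_ne k l with rfl | hkl
        · rw [if_pos rfl, if_pos rfl, kronecker_smul, one_kronecker_one]
        · rw [if_neg (by simp only [Fin.mk.injEq]; exact fun h => hkl (Fin.ext h)),
            if_neg hkl, kronecker_zero]
      · have hkl : k ≠ l := by rintro rfl; exact hl hk
        rw [if_neg hkl]
        simp only [hfdef, dif_pos hk, dif_neg hl]
        by_cases h2n : (l : ℕ) = 2 * n
        · rw [if_pos h2n]; exact kron_mixed σx (by rw [add_comm]; exact hxz) _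
        · rw [if_neg h2n]; exact kron_mixed σy (by rw [add_comm]; exact hyz) _
      · have hkl : k ≠ l := by rintro rfl; exact hk hl
        rw [if_neg hkl, add_comm]
        simp only [hfdef, dif_pos hl, dif_neg hk]
        by_cases h2n : (k : ℕ) = 2 * n
        · rw [if_pos h2n]; exact kron_mixed σx (by rw [add_comm]; exact hxz) _
        · rw [if_neg h2n]; exact kron_mixed σy (by rw [add_comm]; exact hyz) _
      · simp only [hfdef, dif_neg hk, dif_neg hl]
        by_cases hk2n : (k : ℕ) = 2 * n <;> by_cases hl2n : (l : ℕ) = 2 * n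
        · have hkl : k = l := Fin.ext (by omega)
          rw [if_pos hk2n, if_pos hl2n, if_pos hkl, kron_new_new, hxx, ← two_smul ℂ,
            smul_kronecker, one_kronecker_one]
        · rw [if_pos hk2n, if_neg hl2n, if_neg (show ¬ k = l by rintro rfl; exact hl2n hk2n),
            kron_new_new, hxy, zero_kronecker]
        · rw [if_neg hk2n, if_pos hl2n, if_neg (show ¬ k = l by rintro rfl; exact hk2n hl2n),
            kron_new_new, add_comm (σy * σx), hxy, zero_kronecker]
        · have hkl : k = l := Fin.ext (by omega)
          rw [if_neg hk2n, if_neg hl2n, if_pos hkl, kron_new_new, hyy, ← two_smul ℂ,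
            smul_kronecker, one_kronecker_one]
    have hS : Algebra.adjoin ℂ (Set.range f) = ⊤ := by
      set S := Algebra.adjoin ℂ (Set.range f) with hSdef
      have hmemf : ∀ k, f k ∈ S := fun k => Algebra.subset_adjoin ⟨k, rfl⟩
      have hx1 : σx ⊗ₖ (1 : Matrix (Fin (2 ^ n)) (Fin (2 ^ n)) ℂ) ∈ S := by
        have h := hmemf ⟨2 * n, by omega⟩
        simp only [hfdef] at h
        simpa using h
      have hy1 : σy ⊗ₖ (1 : Matrix (Fin (2 ^ n)) (Fin (2 ^ n)) ℂ) ∈ S := by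
        have h := hmemf ⟨2 * n + 1, by omega⟩
        simp only [hfdef] at h
        rw [dif_neg (by omega), if_neg (by omega)] at h
        exact h
      have hA : ∀ a : Matrix (Fin 2) (Fin 2) ℂ,
          a ⊗ₖ (1 : Matrix (Fin (2 ^ n)) (Fin (2 ^ n)) ℂ) ∈ S := by
        intro a
        have htop : S.comap (kronL (Fin 2) (Fin (2 ^ n))) = ⊤ := pauli_gen _ hx1 hy1
        have ha : a ∈ S.comap (kronL (Fin 2) (Fin (2 ^ n))) := by rw [htop]; trivial
        exact ha
      have hz1 : σz ⊗ₖ (1 : Matrix (Fin (2 ^ n)) (Fin (2 ^ n)) ℂ) ∈ S := hA σz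
      have hB : ∀ b : Matrix (Fin (2 ^ n)) (Fin (2 ^ n)) ℂ,
          (1 : Matrix (Fin 2) (Fin 2) ℂ) ⊗ₖ b ∈ S := by
        have hBsub : Algebra.adjoin ℂ (Set.range e)
            ≤ S.comap (kronR (Fin 2) (Fin (2 ^ n))) := by
          apply Algebra.adjoin_le
          rintro x ⟨j, rfl⟩
          simp only [SetLike.mem_coe, Subalgebra.mem_comap]
          have hj : σz ⊗ₖ e j ∈ S := by
            have h := hmemf ⟨j, by omega⟩
            simp only [hfdef] at h
            rwa [dif_pos j.isLt, Fin.eta] at h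
          have heq : (1 : Matrix (Fin 2) (Fin 2) ℂ) ⊗ₖ e j
              = (σz ⊗ₖ 1) * (σz ⊗ₖ e j) := by
            rw [← mul_kronecker_mul, hzz, one_mul]
          show (1 : Matrix (Fin 2) (Fin 2) ℂ) ⊗ₖ e j ∈ S
          rw [heq]; exact S.mul_mem hz1 hj
        intro b
        have hb : b ∈ Algebra.adjoin ℂ (Set.range e) := by rw [hgen]; trivial
        have := hBsub hb
        rwa [Subalgebra.mem_comap] at this
      apply subalg_top
      rintro ⟨i, a⟩ ⟨j, b⟩
      rw [← stdBasis_kron]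
      have heq : (single i j (1 : ℂ)) ⊗ₖ (single a b 1)
          = ((single i j 1) ⊗ₖ (1 : Matrix (Fin (2 ^ n)) (Fin (2 ^ n)) ℂ))
            * ((1 : Matrix (Fin 2) (Fin 2) ℂ) ⊗ₖ (single a b 1)) := by
        rw [← mul_kronecker_mul, mul_one, one_mul]
      rw [heq]
      exact S.mul_mem (hA _) (hB _)
    refine ⟨fun k => ψ (f k), ?_, ?_⟩
    · intro k l
      rw [← _root_.map_mul, ← _root_.map_mul, ← _root_.map_add, hf k l]
      split_ifs with h
      · rw [_root_.map_smul, _root_.map_one]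
      · rw [_root_.map_zero]
    · rw [eq_top_iff]
      rintro x -
      obtain ⟨y, rfl⟩ := ψ.surjective x
      have hy : y ∈ Algebra.adjoin ℂ (Set.range f) := by rw [hS]; trivial
      have hle : Algebra.adjoin ℂ (Set.range f)
          ≤ (Algebra.adjoin ℂ (Set.range fun k => ψ (f k))).comap ψ.toAlgHom := by
        apply Algebra.adjoin_le
        rintro z ⟨j, rfl⟩
        simp only [SetLike.mem_coe, Subalgebra.mem_comap]
        exact Algebra.subset_adjoin ⟨j, rfl⟩
      have := hle hy
      rwa [Subalgebra.mem_comap] at this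
end
end

section
/- Let S be any subset of FreeAlgebra ℂ (Fin 2) contained in the ℂ-linear span of {1, X₁, X₂} (i.e., every element of S has word length at most 1), and let I be the two-sided ideal generated by S. Then the quotient algebra FreeAlgebra ℂ (Fin 2) / I is not isomorphic as a ℂ-algebra to M₂(ℂ). (Thus the relations in any presentation of M₂(ℂ) must have word length at least 2.) -/
/-- If `S` is a subset of `FreeAlgebra ℂ (Fin 2)` contained in the `ℂ`-linear span of
`{1, X₁, X₂}` (every element of `S` has word length at most 1), then the quotient of the free
algebra by the two-sided ideal generated by `S` is not isomorphic as a `ℂ`-algebra to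
`M₂(ℂ)`. Here the quotient by the two-sided ideal `TwoSidedIdeal.span S` is realized as
`RingQuot` of the relation `x ~ y ↔ x - y ∈ TwoSidedIdeal.span S`. -/
theorem quotient_by_wordlength_one_relations_ne_M2 (S : Set (FreeAlgebra ℂ (Fin 2)))
    (hS : S ⊆ (Submodule.span ℂ
      {(1 : FreeAlgebra ℂ (Fin 2)), FreeAlgebra.ι ℂ 0, FreeAlgebra.ι ℂ 1} :
        Submodule ℂ (FreeAlgebra ℂ (Fin 2)))) :
    IsEmpty
      (RingQuot (fun x y : FreeAlgebra ℂ (Fin 2) => x - y ∈ TwoSidedIdeal.span S)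
        ≃ₐ[ℂ] Matrix (Fin 2) (Fin 2) ℂ) := by
  constructor
  intro e
  by_cases h1 : (1 : FreeAlgebra ℂ (Fin 2)) ∈ Submodule.span ℂ S
  · -- the ideal contains 1, so the quotient is trivial
    have hone : (1 : FreeAlgebra ℂ (Fin 2)) ∈ TwoSidedIdeal.span S := by
      rw [TwoSidedIdeal.mem_span_iff]
      intro I hI
      refine Submodule.span_induction (fun x hx => hI hx) I.zero_mem
        (fun x y _ _ hx hy => I.add_mem hx hy) (fun c x _ hx => ?_) h1
      have : c • x = algebraMap ℂ (FreeAlgebra ℂ (Fin 2)) c * x := by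
        rw [Algebra.smul_def]
      rw [this]
      exact I.mul_mem_left _ _ hx
    have hq : (RingQuot.mkAlgHom ℂ
        (fun x y : FreeAlgebra ℂ (Fin 2) => x - y ∈ TwoSidedIdeal.span S)) 1
        = (RingQuot.mkAlgHom ℂ _) 0 := by
      apply RingQuot.mkAlgHom_rel
      simpa using hone
    have : (1 : Matrix (Fin 2) (Fin 2) ℂ) = 0 := by
      calc (1 : Matrix (Fin 2) (Fin 2) ℂ)
          = e ((RingQuot.mkAlgHom ℂ _) 1) := by simp
        _ = e ((RingQuot.mkAlgHom ℂ _) 0) := by rw [hq]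
        _ = 0 := by simp
    exact one_ne_zero this
  · -- find a character killing S
    obtain ⟨f, hf1, hfp⟩ := (Submodule.span ℂ S).exists_dual_map_eq_bot_of_notMem h1
      inferInstance
    have hfS : ∀ s ∈ S, f s = 0 := by
      intro s hs
      have : f s ∈ (Submodule.span ℂ S).map f := ⟨s, Submodule.subset_span hs, rfl⟩
      rw [hfp] at this
      exact this
    set x : Fin 2 → ℂ := fun i => f (FreeAlgebra.ι ℂ i) / f 1 with hx
    set φ : FreeAlgebra ℂ (Fin 2) →ₐ[ℂ] ℂ := FreeAlgebra.lift ℂ x with hφ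
    have key : ∀ v ∈ (Submodule.span ℂ
        {(1 : FreeAlgebra ℂ (Fin 2)), FreeAlgebra.ι ℂ 0, FreeAlgebra.ι ℂ 1} :
          Submodule ℂ (FreeAlgebra ℂ (Fin 2))), φ v = f v / f 1 := by
      intro v hv
      refine Submodule.span_induction (fun w hw => ?_) (by simp) (fun a b _ _ ha hb => ?_)
        (fun c a _ ha => ?_) hv
      · rcases hw with h | h | h <;> subst h
        · simp [div_self hf1]
        · simp [hφ, FreeAlgebra.lift_ι_apply, hx]
        · simp [hφ, FreeAlgebra.lift_ι_apply, hx]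
      · rw [map_add, map_add, add_div, ha, hb]
      · rw [map_smul, map_smul, ha, smul_eq_mul, smul_eq_mul, mul_div_assoc]
    have hφS : ∀ s ∈ S, φ s = 0 := fun s hs => by
      rw [key s (hS hs), hfS s hs, zero_div]
    have w : ∀ ⦃a b : FreeAlgebra ℂ (Fin 2)⦄,
        a - b ∈ TwoSidedIdeal.span S → φ a = φ b := by
      intro a b hab
      have hker : a - b ∈ TwoSidedIdeal.ker φ := by
        rw [TwoSidedIdeal.mem_span_iff] at hab
        exact hab _ (fun s hs => (TwoSidedIdeal.mem_ker φ).2 (hφS s hs))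
      rw [TwoSidedIdeal.mem_ker] at hker
      rw [map_sub, sub_eq_zero] at hker
      exact hker
    set ψ : RingQuot (fun x y : FreeAlgebra ℂ (Fin 2) => x - y ∈ TwoSidedIdeal.span S) →ₐ[ℂ] ℂ :=
      RingQuot.liftAlgHom ℂ ⟨φ, w⟩
    set χ : Matrix (Fin 2) (Fin 2) ℂ →ₐ[ℂ] ℂ := ψ.comp e.symm.toAlgHom with hχ
    -- no algebra hom M₂(ℂ) → ℂ exists
    set E : Fin 2 → Fin 2 → Matrix (Fin 2) (Fin 2) ℂ :=
      fun i j => Matrix.single i j 1 with hE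
    have m1 : E 0 1 * E 0 1 = 0 := Matrix.single_mul_single_of_ne (c := 1) 0 1 0 (by decide) 1
    have m2 : E 0 1 * E 1 0 = E 0 0 := by
      show Matrix.single _ _ _ * Matrix.single _ _ _ = _
      rw [Matrix.single_mul_single_same, one_mul]
    have m3 : E 1 0 * E 0 1 = E 1 1 := by
      show Matrix.single _ _ _ * Matrix.single _ _ _ = _
      rw [Matrix.single_mul_single_same, one_mul]
    have h01 : χ (E 0 1) = 0 := by
      have : χ (E 0 1) * χ (E 0 1) = 0 := by rw [← map_mul, m1, map_zero]
      exact mul_self_eq_zero.mp this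
    have h00 : χ (E 0 0) = 0 := by rw [← m2, map_mul, h01, zero_mul]
    have h11 : χ (E 1 1) = 0 := by rw [← m3, map_mul, h01, mul_zero]
    have hsum : E 0 0 + E 1 1 = (1 : Matrix (Fin 2) (Fin 2) ℂ) := by
      ext i j
      fin_cases i <;> fin_cases j <;>
        simp [hE, Matrix.single, Matrix.one_apply]
    have : (1 : ℂ) = 0 := by
      rw [← map_one χ, ← hsum, map_add, h00, h11, add_zero]
    exact one_ne_zero this
end
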